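/- Let G be a connected graph with no induced K_{1,3} and no induced hammer, and suppose G contains an induced 6-cycle C. Then the subgraph of G induced on V(G) \ V(C) is a disjoint union of at most three cliques; in particular it contains no independent set of size 4. -/

import Mathlib

open SimpleGraph

/-- The hammer: a triangle `0,1,2` with a pendant path `0 - 3 - 4`. -/
def hammer : SimpleGraph (Fin 5) :=
  SimpleGraph.fromEdgeSet {s(0, 1), s(0, 2), s(1, 2), s(0, 3), s(3, 4)}

lemma hammer_adj_iff (x y : Fin 5) : hammer.Adj x y ↔
    ((x = 0 ∧ y = 1) ∨ (x = 1 ∧ y = 0) ∨ (x = 0 ∧ y = 2) ∨ (x = 2 ∧ y = 0) ∨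
     (x = 1 ∧ y = 2) ∨ (x = 2 ∧ y = 1) ∨ (x = 0 ∧ y = 3) ∨ (x = 3 ∧ y = 0) ∨
     (x = 3 ∧ y = 4) ∨ (x = 4 ∧ y = 3)) := by
  simp only [hammer, fromEdgeSet_adj, Set.mem_insert_iff, Set.mem_singleton_iff, Sym2.eq_iff]
  fin_cases x <;> fin_cases y <;> decide

section aux
variable {V : Type*} {G : SimpleGraph V}

lemma clawFree (hclaw : ¬ Nonempty (completeBipartiteGraph (Fin 1) (Fin 3) ↪g G))
    {a b c d : V} (hab : G.Adj a b) (hac : G.Adj a c) (had : G.Adj a d)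
    (hbc : ¬ G.Adj b c) (hbd : ¬ G.Adj b d) (hcd : ¬ G.Adj c d)
    (nbc : b ≠ c) (nbd : b ≠ d) (ncd : c ≠ d) : False := by
  have nab := G.ne_of_adj hab
  have nac := G.ne_of_adj hac
  have nad := G.ne_of_adj had
  apply hclaw
  refine ⟨⟨⟨Sum.elim (fun _ => a) ![b, c, d], ?_⟩, ?_⟩⟩
  · rintro (x | x) (y | y) h <;> simp only [Sum.elim_inl, Sum.elim_inr] at h
    · simp [Fin.eq_zero x, Fin.eq_zero y]
    · exfalso; fin_cases y <;> simp_all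
    · exfalso; fin_cases x <;> simp_all
    · fin_cases x <;> fin_cases y <;> simp_all
  · rintro (x | x) (y | y) <;>
      simp only [Function.Embedding.coeFn_mk, Sum.elim_inl, Sum.elim_inr,
        completeBipartiteGraph_adj, Sum.isLeft_inl, Sum.isRight_inr, Sum.isRight_inl,
        Sum.isLeft_inr] <;> fin_cases x <;>
    (try fin_cases y) <;> (erw [Function.Embedding.coeFn_mk] at *) <;> simp_all [G.adj_comm]

lemma hammerFree (hham : ¬ Nonempty (hammer ↪g G))
    {a b c d e : V} (hab : G.Adj a b) (hac : G.Adj a c) (hbc : G.Adj b c)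
    (had : G.Adj a d) (hde : G.Adj d e)
    (hbd : ¬ G.Adj b d) (hbe : ¬ G.Adj b e) (hcd : ¬ G.Adj c d)
    (hce : ¬ G.Adj c e) (hae : ¬ G.Adj a e)
    (nbd : b ≠ d) (nbe : b ≠ e) (ncd : c ≠ d) (nce : c ≠ e) (nae : a ≠ e) : False := by
  have nab := G.ne_of_adj hab
  have nac := G.ne_of_adj hac
  have nbc := G.ne_of_adj hbc
  have nad := G.ne_of_adj had
  have nde := G.ne_of_adj hde
  apply hham
  refine ⟨⟨⟨![a, b, c, d, e], ?_⟩, ?_⟩⟩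
  · intro x y h
    fin_cases x <;> fin_cases y <;> simp_all
  · intro x y
    rw [hammer_adj_iff]
    fin_cases x <;> fin_cases y <;> (erw [Function.Embedding.coeFn_mk] at *) <;> simp_all [G.adj_comm]

/-- pattern `{0,1,3,4}` -/
def pat0 (G : SimpleGraph V) (c : Fin 6 → V) (v : V) : Prop :=
  G.Adj v (c 0) ∧ G.Adj v (c 1) ∧ ¬G.Adj v (c 2) ∧ G.Adj v (c 3) ∧ G.Adj v (c 4) ∧ ¬G.Adj v (c 5)

/-- pattern `{1,2,4,5}` -/
def pat1 (G : SimpleGraph V) (c : Fin 6 → V) (v : V) : Prop :=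
  ¬G.Adj v (c 0) ∧ G.Adj v (c 1) ∧ G.Adj v (c 2) ∧ ¬G.Adj v (c 3) ∧ G.Adj v (c 4) ∧ G.Adj v (c 5)

/-- pattern `{0,2,3,5}` -/
def pat2 (G : SimpleGraph V) (c : Fin 6 → V) (v : V) : Prop :=
  G.Adj v (c 0) ∧ ¬G.Adj v (c 1) ∧ G.Adj v (c 2) ∧ G.Adj v (c 3) ∧ ¬G.Adj v (c 4) ∧ G.Adj v (c 5)

end aux

lemma classify6 (b0 b1 b2 b3 b4 b5 : Bool)
    (c0 : b0 = true → b1 = true ∨ b5 = true)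
    (c1 : b1 = true → b2 = true ∨ b0 = true)
    (c2 : b2 = true → b3 = true ∨ b1 = true)
    (c3 : b3 = true → b4 = true ∨ b2 = true)
    (c4 : b4 = true → b5 = true ∨ b3 = true)
    (c5 : b5 = true → b0 = true ∨ b4 = true)
    (d0 : b0 = true → b1 = true → b2 = true ∨ b3 = true)
    (d1 : b1 = true → b2 = true → b3 = true ∨ b4 = true)
    (d2 : b2 = true → b3 = true → b4 = true ∨ b5 = true)
    (d3 : b3 = true → b4 = true → b5 = true ∨ b0 = true)
    (d4 : b4 = true → b5 = true → b0 = true ∨ b1 = true)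
    (d5 : b5 = true → b0 = true → b1 = true ∨ b2 = true)
    (e0 : ¬(b0 = true ∧ b2 = true ∧ b4 = true))
    (e1 : ¬(b1 = true ∧ b3 = true ∧ b5 = true))
    (hne : b0 = true ∨ b1 = true ∨ b2 = true ∨ b3 = true ∨ b4 = true ∨ b5 = true) :
    (b0 = true ∧ b1 = true ∧ ¬b2 = true ∧ b3 = true ∧ b4 = true ∧ ¬b5 = true) ∨
    (¬b0 = true ∧ b1 = true ∧ b2 = true ∧ ¬b3 = true ∧ b4 = true ∧ b5 = true) ∨
    (b0 = true ∧ ¬b1 = true ∧ b2 = true ∧ b3 = true ∧ ¬b4 = true ∧ b5 = true) := by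
  rcases b0 <;> rcases b1 <;> rcases b2 <;> rcases b3 <;> rcases b4 <;> rcases b5 <;> simp_all

theorem claw_hammer_free_C6_outside {V : Type*} (G : SimpleGraph V) (hconn : G.Connected)
    (hclaw : ¬ Nonempty (completeBipartiteGraph (Fin 1) (Fin 3) ↪g G))
    (hham : ¬ Nonempty (hammer ↪g G))
    (f : cycleGraph 6 ↪g G) :
    (∀ u v : ↥(Set.range f)ᶜ, (G.induce (Set.range f)ᶜ).Reachable u v → u ≠ v →
        (G.induce (Set.range f)ᶜ).Adj u v) ∧
      (∃ S₁ S₂ S₃ : Set V, (Set.range f)ᶜ = S₁ ∪ S₂ ∪ S₃ ∧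
        G.IsClique S₁ ∧ G.IsClique S₂ ∧ G.IsClique S₃) ∧
      ¬ ∃ a b c d : V, a ∉ Set.range f ∧ b ∉ Set.range f ∧ c ∉ Set.range f ∧
        d ∉ Set.range f ∧ a ≠ b ∧ a ≠ c ∧ a ≠ d ∧ b ≠ c ∧ b ≠ d ∧ c ≠ d ∧
        ¬ G.Adj a b ∧ ¬ G.Adj a c ∧ ¬ G.Adj a d ∧ ¬ G.Adj b c ∧ ¬ G.Adj b d ∧
        ¬ G.Adj c d := by
  classical
  have hadj : ∀ {i j : Fin 6}, (cycleGraph 6).Adj i j → G.Adj (f i) (f j) :=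
    fun h => f.map_rel_iff.2 h
  have hnadj : ∀ {i j : Fin 6}, ¬(cycleGraph 6).Adj i j → ¬G.Adj (f i) (f j) :=
    fun h hh => h (f.map_rel_iff.1 hh)
  have hfne : ∀ {i j : Fin 6}, i ≠ j → f i ≠ f j := fun h hh => h (f.injective hh)
  have hvne : ∀ {v : V}, v ∉ Set.range f → ∀ i, v ≠ f i := fun hv i h => hv ⟨i, h.symm⟩
  -- center f i, leaves v, f j, f k
  have claw6 : ∀ i j k : Fin 6, (cycleGraph 6).Adj i j → (cycleGraph 6).Adj i k →
      ¬(cycleGraph 6).Adj j k → j ≠ k → ∀ v, v ∉ Set.range f → G.Adj v (f i) →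
      G.Adj v (f j) ∨ G.Adj v (f k) := by
    intro i j k hij hik hjk njk v hv h
    by_contra hcon
    push_neg at hcon
    exact clawFree hclaw h.symm (hadj hij) (hadj hik) hcon.1 hcon.2 (hnadj hjk)
      (hvne hv j) (hvne hv k) (hfne njk)
  -- triangle v, f i, f j; pendant path f j - f k - f l
  have hammer6 : ∀ i j k l : Fin 6, (cycleGraph 6).Adj i j → (cycleGraph 6).Adj j k →
      (cycleGraph 6).Adj k l → ¬(cycleGraph 6).Adj i k → ¬(cycleGraph 6).Adj i l →
      ¬(cycleGraph 6).Adj j l → i ≠ k → i ≠ l → j ≠ l →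
      ∀ v, v ∉ Set.range f → G.Adj v (f i) → G.Adj v (f j) →
      G.Adj v (f k) ∨ G.Adj v (f l) := by
    intro i j k l hij hjk hkl nik nil njl neik neil nejl v hv hvi hvj
    by_contra hcon
    push_neg at hcon
    exact hammerFree hham (hadj hij).symm hvj.symm hvi.symm (hadj hjk) (hadj hkl)
      (hnadj nik) (hnadj nil) hcon.1 hcon.2 (hnadj njl)
      (hfne neik) (hfne neil) (hvne hv k) (hvne hv l) (hfne nejl)
  -- center v, leaves f i, f j, f k
  have clawv3 : ∀ i j k : Fin 6, ¬(cycleGraph 6).Adj i j → ¬(cycleGraph 6).Adj i k →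
      ¬(cycleGraph 6).Adj j k → i ≠ j → i ≠ k → j ≠ k → ∀ v, v ∉ Set.range f →
      ¬(G.Adj v (f i) ∧ G.Adj v (f j) ∧ G.Adj v (f k)) := by
    rintro i j k nij nik njk neij neik nejk v hv ⟨h1, h2, h3⟩
    exact clawFree hclaw h1 h2 h3 (hnadj nij) (hnadj nik) (hnadj njk)
      (hfne neij) (hfne neik) (hfne nejk)
  -- center v, leaves w, f i, f j
  have clawStep : ∀ i j : Fin 6, ¬(cycleGraph 6).Adj i j → i ≠ j → ∀ v w, w ∉ Set.range f →
      G.Adj v w → G.Adj v (f i) → G.Adj v (f j) → G.Adj w (f i) ∨ G.Adj w (f j) := by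
    intro i j nij neij v w hw hvw hvi hvj
    by_contra hcon
    push_neg at hcon
    exact clawFree hclaw hvw hvi hvj hcon.1 hcon.2 (hnadj nij)
      (hvne hw i) (hvne hw j) (hfne neij)
  -- center f i, leaves v, w, f j : forces v ~ w
  have clawSame : ∀ i j : Fin 6, (cycleGraph 6).Adj i j → ∀ v w, v ∉ Set.range f →
      w ∉ Set.range f → v ≠ w → ¬G.Adj v (f j) → ¬G.Adj w (f j) →
      G.Adj v (f i) → G.Adj w (f i) → G.Adj v w := by
    intro i j hij v w hv hw hne hnvj hnwj hvi hwi
    by_contra hvw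
    exact clawFree hclaw hvi.symm hwi.symm (hadj hij) hvw hnvj hnwj hne
      (hvne hv j) (hvne hw j)
  -- classification of neighborhoods on the cycle
  have type_of : ∀ v, v ∉ Set.range f → (∃ i, G.Adj v (f i)) →
      pat0 G (⇑f) v ∨ pat1 G (⇑f) v ∨ pat2 G (⇑f) v := by
    rintro v hv ⟨i, hi⟩
    have key := classify6 (decide (G.Adj v (f 0))) (decide (G.Adj v (f 1)))
      (decide (G.Adj v (f 2))) (decide (G.Adj v (f 3))) (decide (G.Adj v (f 4)))
      (decide (G.Adj v (f 5)))
      (by simp only [decide_eq_true_eq]; exact claw6 0 1 5 (by decide) (by decide) (by decide) (by decide) v hv)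
      (by simp only [decide_eq_true_eq]; exact claw6 1 2 0 (by decide) (by decide) (by decide) (by decide) v hv)
      (by simp only [decide_eq_true_eq]; exact claw6 2 3 1 (by decide) (by decide) (by decide) (by decide) v hv)
      (by simp only [decide_eq_true_eq]; exact claw6 3 4 2 (by decide) (by decide) (by decide) (by decide) v hv)
      (by simp only [decide_eq_true_eq]; exact claw6 4 5 3 (by decide) (by decide) (by decide) (by decide) v hv)
      (by simp only [decide_eq_true_eq]; exact claw6 5 0 4 (by decide) (by decide) (by decide) (by decide) v hv)
      (by simp only [decide_eq_true_eq]; exact hammer6 0 1 2 3 (by decide) (by decide) (by decide) (by decide) (by decide) (by decide) (by decide) (by decide) (by decide) v hv)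
      (by simp only [decide_eq_true_eq]; exact hammer6 1 2 3 4 (by decide) (by decide) (by decide) (by decide) (by decide) (by decide) (by decide) (by decide) (by decide) v hv)
      (by simp only [decide_eq_true_eq]; exact hammer6 2 3 4 5 (by decide) (by decide) (by decide) (by decide) (by decide) (by decide) (by decide) (by decide) (by decide) v hv)
      (by simp only [decide_eq_true_eq]; exact hammer6 3 4 5 0 (by decide) (by decide) (by decide) (by decide) (by decide) (by decide) (by decide) (by decide) (by decide) v hv)
      (by simp only [decide_eq_true_eq]; exact hammer6 4 5 0 1 (by decide) (by decide) (by decide) (by decide) (by decide) (by decide) (by decide) (by decide) (by decide) v hv)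
      (by simp only [decide_eq_true_eq]; exact hammer6 5 0 1 2 (by decide) (by decide) (by decide) (by decide) (by decide) (by decide) (by decide) (by decide) (by decide) v hv)
      (by simp only [decide_eq_true_eq]; exact clawv3 0 2 4 (by decide) (by decide) (by decide) (by decide) (by decide) (by decide) v hv)
      (by simp only [decide_eq_true_eq]; exact clawv3 1 3 5 (by decide) (by decide) (by decide) (by decide) (by decide) (by decide) v hv)
      (by simp only [decide_eq_true_eq]; fin_cases i <;> tauto)
    simp only [decide_eq_true_eq] at key
    exact key
  -- adjacency preserves type
  have step0 : ∀ v w, v ∉ Set.range f → w ∉ Set.range f → pat0 G (⇑f) v → G.Adj v w →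
      pat0 G (⇑f) w := by
    intro v w hv hw hp hvw
    have h03 := clawStep 0 3 (by decide) (by decide) v w hw hvw hp.1 hp.2.2.2.1
    have h14 := clawStep 1 4 (by decide) (by decide) v w hw hvw hp.2.1 hp.2.2.2.2.1
    have hex : ∃ i, G.Adj w (f i) := by rcases h03 with h | h; exacts [⟨0, h⟩, ⟨3, h⟩]
    rcases type_of w hw hex with hq | hq | hq
    · exact hq
    · exact absurd h03 (by push_neg; exact ⟨hq.1, hq.2.2.2.1⟩)
    · exact absurd h14 (by push_neg; exact ⟨hq.2.1, hq.2.2.2.2.1⟩)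
  have step1 : ∀ v w, v ∉ Set.range f → w ∉ Set.range f → pat1 G (⇑f) v → G.Adj v w →
      pat1 G (⇑f) w := by
    intro v w hv hw hp hvw
    have h14 := clawStep 1 4 (by decide) (by decide) v w hw hvw hp.2.1 hp.2.2.2.2.1
    have h25 := clawStep 2 5 (by decide) (by decide) v w hw hvw hp.2.2.1 hp.2.2.2.2.2
    have hex : ∃ i, G.Adj w (f i) := by rcases h14 with h | h; exacts [⟨1, h⟩, ⟨4, h⟩]
    rcases type_of w hw hex with hq | hq | hq
    · exact absurd h25 (by push_neg; exact ⟨hq.2.2.1, hq.2.2.2.2.2⟩)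
    · exact hq
    · exact absurd h14 (by push_neg; exact ⟨hq.2.1, hq.2.2.2.2.1⟩)
  have step2 : ∀ v w, v ∉ Set.range f → w ∉ Set.range f → pat2 G (⇑f) v → G.Adj v w →
      pat2 G (⇑f) w := by
    intro v w hv hw hp hvw
    have h03 := clawStep 0 3 (by decide) (by decide) v w hw hvw hp.1 hp.2.2.2.1
    have h25 := clawStep 2 5 (by decide) (by decide) v w hw hvw hp.2.2.1 hp.2.2.2.2.2
    have hex : ∃ i, G.Adj w (f i) := by rcases h03 with h | h; exacts [⟨0, h⟩, ⟨3, h⟩]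
    rcases type_of w hw hex with hq | hq | hq
    · exact absurd h25 (by push_neg; exact ⟨hq.2.2.1, hq.2.2.2.2.2⟩)
    · exact absurd h03 (by push_neg; exact ⟨hq.1, hq.2.2.2.1⟩)
    · exact hq
  -- same type implies adjacent
  have same0 : ∀ v w, v ∉ Set.range f → w ∉ Set.range f → pat0 G (⇑f) v → pat0 G (⇑f) w →
      v ≠ w → G.Adj v w := fun v w hv hw hp hq hne =>
    clawSame 0 5 (by decide) v w hv hw hne hp.2.2.2.2.2 hq.2.2.2.2.2 hp.1 hq.1
  have same1 : ∀ v w, v ∉ Set.range f → w ∉ Set.range f → pat1 G (⇑f) v → pat1 G (⇑f) w →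
      v ≠ w → G.Adj v w := fun v w hv hw hp hq hne =>
    clawSame 1 0 (by decide) v w hv hw hne hp.1 hq.1 hp.2.1 hq.2.1
  have same2 : ∀ v w, v ∉ Set.range f → w ∉ Set.range f → pat2 G (⇑f) v → pat2 G (⇑f) w →
      v ≠ w → G.Adj v w := fun v w hv hw hp hq hne =>
    clawSame 2 1 (by decide) v w hv hw hne hp.2.1 hq.2.1 hp.2.2.1 hq.2.2.1
  -- every vertex outside the cycle has a type
  have typed : ∀ v, v ∉ Set.range f →
      pat0 G (⇑f) v ∨ pat1 G (⇑f) v ∨ pat2 G (⇑f) v := by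
    have Tstep : ∀ u w, G.Adj u w →
        (u ∈ Set.range f ∨ pat0 G (⇑f) u ∨ pat1 G (⇑f) u ∨ pat2 G (⇑f) u) →
        (w ∈ Set.range f ∨ pat0 G (⇑f) w ∨ pat1 G (⇑f) w ∨ pat2 G (⇑f) w) := by
      intro u w huw hu
      by_cases hw : w ∈ Set.range f
      · exact Or.inl hw
      refine Or.inr (type_of w hw ?_)
      rcases hu with ⟨i, hi⟩ | hp | hp | hp
      · exact ⟨i, by rw [hi]; exact huw.symm⟩
      · rcases clawStep 0 3 (by decide) (by decide) u w hw huw hp.1 hp.2.2.2.1 with h | h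
        exacts [⟨0, h⟩, ⟨3, h⟩]
      · rcases clawStep 1 4 (by decide) (by decide) u w hw huw hp.2.1 hp.2.2.2.2.1 with h | h
        exacts [⟨1, h⟩, ⟨4, h⟩]
      · rcases clawStep 0 3 (by decide) (by decide) u w hw huw hp.1 hp.2.2.2.1 with h | h
        exacts [⟨0, h⟩, ⟨3, h⟩]
    have Twalk : ∀ u w : V, G.Walk u w →
        (u ∈ Set.range f ∨ pat0 G (⇑f) u ∨ pat1 G (⇑f) u ∨ pat2 G (⇑f) u) →
        (w ∈ Set.range f ∨ pat0 G (⇑f) w ∨ pat1 G (⇑f) w ∨ pat2 G (⇑f) w) := by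
      intro u w p
      induction p with
      | nil => exact id
      | cons h q ih => exact fun hu => ih (Tstep _ _ h hu)
    intro v hv
    obtain ⟨p⟩ := hconn.preconnected (f 0) v
    rcases Twalk _ _ p (Or.inl ⟨0, rfl⟩) with h | h
    · exact absurd h hv
    · exact h
  refine ⟨?_, ?_, ?_⟩
  · -- reachable outside implies adjacent
    intro u v hr hne
    have huV : (u : V) ∉ Set.range f := u.2
    have hvV : (v : V) ∉ Set.range f := v.2
    obtain ⟨p⟩ := hr
    have pres : ∀ (a b : ↥(Set.range ⇑f)ᶜ), (G.induce (Set.range ⇑f)ᶜ).Walk a b →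
        (pat0 G (⇑f) ↑a → pat0 G (⇑f) ↑b) ∧ (pat1 G (⇑f) ↑a → pat1 G (⇑f) ↑b) ∧
        (pat2 G (⇑f) ↑a → pat2 G (⇑f) ↑b) := by
      intro a b p
      induction p with
      | nil => exact ⟨id, id, id⟩
      | @cons x y z h q ih =>
        have hxy : G.Adj (x : V) (y : V) := h
        exact ⟨fun hp => ih.1 (step0 _ _ x.2 y.2 hp hxy),
          fun hp => ih.2.1 (step1 _ _ x.2 y.2 hp hxy),
          fun hp => ih.2.2 (step2 _ _ x.2 y.2 hp hxy)⟩
    have hneV : (u : V) ≠ (v : V) := fun h => hne (Subtype.ext h)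
    have : G.Adj (u : V) (v : V) := by
      rcases typed u huV with hp | hp | hp
      · exact same0 _ _ huV hvV hp ((pres u v p).1 hp) hneV
      · exact same1 _ _ huV hvV hp ((pres u v p).2.1 hp) hneV
      · exact same2 _ _ huV hvV hp ((pres u v p).2.2 hp) hneV
    exact this
  · -- decomposition into three cliques
    refine ⟨{v | v ∉ Set.range f ∧ pat0 G (⇑f) v}, {v | v ∉ Set.range f ∧ pat1 G (⇑f) v},
      {v | v ∉ Set.range f ∧ pat2 G (⇑f) v}, ?_, ?_, ?_, ?_⟩
    · ext v
      simp only [Set.mem_compl_iff, Set.mem_union, Set.mem_setOf_eq]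
      constructor
      · intro hv
        rcases typed v hv with h | h | h
        exacts [Or.inl (Or.inl ⟨hv, h⟩), Or.inl (Or.inr ⟨hv, h⟩), Or.inr ⟨hv, h⟩]
      · rintro ((⟨h, _⟩ | ⟨h, _⟩) | ⟨h, _⟩) <;> exact h
    · exact fun v hv w hw hne => same0 v w hv.1 hw.1 hv.2 hw.2 hne
    · exact fun v hv w hw hne => same1 v w hv.1 hw.1 hv.2 hw.2 hne
    · exact fun v hv w hw hne => same2 v w hv.1 hw.1 hv.2 hw.2 hne
  · -- no independent set of size four outside
    rintro ⟨a, b, c, d, ha, hb, hc, hd, nab, nac, nad, nbc, nbd, ncd,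
      eab, eac, ead, ebc, ebd, ecd⟩
    have ta := typed a ha
    have tb := typed b hb
    have tc := typed c hc
    have td := typed d hd
    have key : ∀ x y, x ∉ Set.range f → y ∉ Set.range f → x ≠ y → ¬G.Adj x y →
        ¬(pat0 G (⇑f) x ∧ pat0 G (⇑f) y) ∧ ¬(pat1 G (⇑f) x ∧ pat1 G (⇑f) y) ∧
        ¬(pat2 G (⇑f) x ∧ pat2 G (⇑f) y) := fun x y hx hy hne hnadj =>
      ⟨fun ⟨h1, h2⟩ => hnadj (same0 x y hx hy h1 h2 hne),
       fun ⟨h1, h2⟩ => hnadj (same1 x y hx hy h1 h2 hne),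
       fun ⟨h1, h2⟩ => hnadj (same2 x y hx hy h1 h2 hne)⟩
    have kab := key a b ha hb nab eab
    have kac := key a c ha hc nac eac
    have kad := key a d ha hd nad ead
    have kbc := key b c hb hc nbc ebc
    have kbd := key b d hb hd nbd ebd
    have kcd := key c d hc hd ncd ecd
    obtain ⟨k1, k2, k3⟩ := kab
    obtain ⟨l1, l2, l3⟩ := kac
    obtain ⟨m1, m2, m3⟩ := kad
    obtain ⟨n1, n2, n3⟩ := kbc
    obtain ⟨o1, o2, o3⟩ := kbd
    obtain ⟨p1, p2, p3⟩ := kcd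
    rcases ta with h | h | h <;> rcases tb with h' | h' | h' <;>
      rcases tc with h'' | h'' | h'' <;> rcases td with h''' | h''' | h''' <;>
      first
      | exact k1 ⟨h, h'⟩
      | exact k2 ⟨h, h'⟩
      | exact k3 ⟨h, h'⟩
      | exact l1 ⟨h, h''⟩
      | exact l2 ⟨h, h''⟩
      | exact l3 ⟨h, h''⟩
      | exact m1 ⟨h, h'''⟩
      | exact m2 ⟨h, h'''⟩
      | exact m3 ⟨h, h'''⟩
      | exact n1 ⟨h', h''⟩
      | exact n2 ⟨h', h''⟩
      | exact n3 ⟨h', h''⟩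
      | exact o1 ⟨h', h'''⟩
      | exact o2 ⟨h', h'''⟩
      | exact o3 ⟨h', h'''⟩
      | exact p1 ⟨h'', h'''⟩
      | exact p2 ⟨h'', h'''⟩
      | exact p3 ⟨h'', h'''⟩
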